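/- Let m, n ≥ 2 be natural numbers and let f : ZMod m × ZMod m → ZMod n be a symmetric normalized 2-cocycle. Let S_m ∈ ZMod n be the sum S_m = Σ_{k=0}^{m−1} f(1, k). Then the twisted product group C_n ×^f C_m (the set ZMod n × ZMod m with multiplication (h₁, g₁)·(h₂, g₂) = (h₁ + h₂ + f(g₁, g₂), g₁ + g₂)) is a cyclic group if and only if gcd(s, gcd(m, n)) = 1, where s is any integer representative of S_m (this condition does not depend on the choice of representative). -/

import Mathlib

/-- If `gcd(s, gcd(m,n)) = 1` then some representative `s + m*t` of the coset of `s`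
modulo `m` is coprime to `n`. -/
private lemma exists_coprime_rep (m n : ℕ) (hn : 0 < n) (s : ℤ)
    (h : Int.gcd s (Nat.gcd m n : ℤ) = 1) :
    ∃ t : ℕ, Int.gcd (s + m * t) n = 1 := by
  classical
  refine ⟨(n.primeFactors.filter (fun p : ℕ => ¬ (p : ℤ) ∣ s)).prod id, ?_⟩
  set t : ℕ := (n.primeFactors.filter (fun p : ℕ => ¬ (p : ℤ) ∣ s)).prod id with ht
  by_contra hne
  have hg0 : Int.gcd (s + m * t) n ≠ 0 := by
    intro h0
    rw [Int.gcd_eq_zero_iff] at h0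
    have : (n : ℤ) = 0 := h0.2
    exact_mod_cast absurd this (by exact_mod_cast hn.ne')
  obtain ⟨p, hp, hpd⟩ := Nat.exists_prime_and_dvd hne
  have hpZ : (p : ℤ) ∣ s + m * t :=
    dvd_trans (Int.natCast_dvd_natCast.mpr hpd) (Int.gcd_dvd_left _ _)
  have hpn : p ∣ n := by
    have := dvd_trans (Int.natCast_dvd_natCast.mpr hpd) (Int.gcd_dvd_right _ _)
    exact_mod_cast this
  have hppZ : Prime (p : ℤ) := Nat.prime_iff_prime_int.mp hp
  by_cases hps : (p : ℤ) ∣ s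
  · -- p divides s; then p cannot divide m nor t
    have hpm : ¬ p ∣ m := by
      intro hpm
      have h1 : (p : ℤ) ∣ (Nat.gcd m n : ℤ) :=
        Int.natCast_dvd_natCast.mpr (Nat.dvd_gcd hpm hpn)
      have h2 : (p : ℤ) ∣ (Int.gcd s (Nat.gcd m n : ℤ) : ℤ) := Int.dvd_coe_gcd hps h1
      rw [h] at h2
      have : p ∣ 1 := by exact_mod_cast h2
      exact Nat.Prime.one_lt hp |>.ne' (Nat.dvd_one.mp this)
    have hpt : ¬ p ∣ t := by
      intro hpt
      rw [ht] at hpt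
      obtain ⟨q, hq, hpq⟩ := (hp.prime.dvd_finset_prod_iff _).mp hpt
      rw [Finset.mem_filter] at hq
      have hqp : Nat.Prime q := Nat.prime_of_mem_primeFactors hq.1
      have : p = q := (Nat.prime_dvd_prime_iff_eq hp hqp).mp hpq
      exact hq.2 (this ▸ hps)
    have hmt : (p : ℤ) ∣ (m : ℤ) * t := by
      have := dvd_sub hpZ hps
      simpa using this
    rcases hppZ.dvd_mul.mp hmt with h1 | h1
    · exact hpm (Int.natCast_dvd_natCast.mp h1)
    · exact hpt (Int.natCast_dvd_natCast.mp h1)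
  · -- p does not divide s; then p divides t, hence p divides s, contradiction
    have hpt : p ∣ t := by
      rw [ht]
      refine Finset.dvd_prod_of_mem _ ?_
      rw [Finset.mem_filter, Nat.mem_primeFactors]
      exact ⟨⟨hp, hpn, hn.ne'⟩, hps⟩
    have h2 : (p : ℤ) ∣ (m : ℤ) * t :=
      Dvd.dvd.mul_left (Int.natCast_dvd_natCast.mpr hpt) _
    have : (p : ℤ) ∣ s := by
      have := dvd_sub hpZ h2
      simpa using this
    exact hps this

/-- The twisted product `ZMod n ×^f ZMod m` of two finite cyclic groups along a symmetric
normalized 2-cocycle `f` is cyclic iff `gcd(s, gcd(m, n)) = 1` for any integer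
representative `s` of `S_m = ∑_{k=0}^{m-1} f(1, k)`. -/
theorem twisted_product_of_finite_cyclics_isCyclic_iff
    (m n : ℕ) (hm : 2 ≤ m) (hn : 2 ≤ n)
    (f : ZMod m × ZMod m → ZMod n)
    (hsym : ∀ g₁ g₂ : ZMod m, f (g₁, g₂) = f (g₂, g₁))
    (hnorm : f (0, 0) = 0)
    (hcoc : ∀ g₁ g₂ g₃ : ZMod m,
      f (g₁, g₂) + f (g₁ + g₂, g₃) = f (g₂, g₃) + f (g₁, g₂ + g₃))
    (G : Type*) [Group G] (e : G ≃ ZMod n × ZMod m)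
    (hone : e 1 = (0, 0))
    (hmul : ∀ x y : G,
      e (x * y) = ((e x).1 + (e y).1 + f ((e x).2, (e y).2), (e x).2 + (e y).2))
    (s : ℤ) (hs : (s : ZMod n) = ∑ k ∈ Finset.range m, f (1, (k : ZMod m))) :
    IsCyclic G ↔ Int.gcd s (Nat.gcd m n : ℤ) = 1 := by
  haveI : NeZero n := ⟨by omega⟩
  haveI : NeZero m := ⟨by omega⟩
  haveI : Finite G := Finite.of_equiv _ e.symm
  have hcard : Nat.card G = n * m := by
    rw [Nat.card_congr e, Nat.card_prod, Nat.card_zmod, Nat.card_zmod]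
  -- basic cocycle facts
  have hf0 : ∀ g : ZMod m, f (0, g) = 0 := by
    intro g
    have := hcoc 0 0 g
    simp only [add_zero, zero_add, hnorm] at this
    linear_combination -this
  set A : ZMod n → G := fun h => e.symm (h, 0) with hA
  set b : G := e.symm (0, 1) with hbdef
  have heA : ∀ h, e (A h) = (h, 0) := fun h => e.apply_symm_apply _
  have heb : e b = (0, 1) := e.apply_symm_apply _
  have hA0 : A 0 = 1 := by
    apply e.injective
    rw [heA, hone]
  have hA_mul : ∀ h₁ h₂, A h₁ * A h₂ = A (h₁ + h₂) := by
    intro h₁ h₂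
    apply e.injective
    rw [hmul, heA, heA, heA, hnorm]
    simp
  have hA_pow : ∀ (k : ℕ) (h : ZMod n), (A h) ^ k = A (k • h) := by
    intro k h
    induction k with
    | zero => simpa using hA0.symm
    | succ k ih => rw [pow_succ, ih, hA_mul, succ_nsmul]
  have hA_inj : Function.Injective A := by
    intro x y hxy
    have := congrArg e hxy
    rw [heA, heA] at this
    exact (Prod.ext_iff.mp this).1
  have hcomm : ∀ x y : G, Commute x y := by
    intro x y
    show x * y = y * x
    apply e.injective
    rw [hmul, hmul, hsym (e x).2 (e y).2, add_comm (e x).1, add_comm (e x).2]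
  have hsnd : ∀ (x : G) (k : ℕ), (e (x ^ k)).2 = (k : ZMod m) * (e x).2 := by
    intro x k
    induction k with
    | zero => simp [hone]
    | succ k ih =>
      rw [pow_succ, hmul, ih]
      push_cast
      ring
  have hb_pow : ∀ k : ℕ,
      e (b ^ k) = (∑ j ∈ Finset.range k, f (1, (j : ZMod m)), (k : ZMod m)) := by
    intro k
    induction k with
    | zero => simpa using hone
    | succ k ih =>
      rw [pow_succ, hmul, ih, heb, Finset.sum_range_succ, hsym (1 : ZMod m) (k : ZMod m)]
      push_cast
      simp
  have hbm : b ^ m = A ((s : ZMod n)) := by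
    apply e.injective
    rw [hb_pow m, heA, ← hs, ZMod.natCast_self]
  have hdecomp : ∀ x : G, ∃ (h : ZMod n) (j : ℕ), x = A h * b ^ j := by
    intro x
    refine ⟨(e x).1 - ∑ j ∈ Finset.range (e x).2.val, f (1, (j : ZMod m)),
      (e x).2.val, ?_⟩
    apply e.injective
    rw [hmul, heA, hb_pow, ZMod.natCast_zmod_val, hf0]
    simp
  constructor
  · -- cyclic → gcd = 1
    intro hcyc
    by_contra hne
    obtain ⟨p, hp, hpd⟩ := Nat.exists_prime_and_dvd hne
    have hps : (p : ℤ) ∣ s :=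
      dvd_trans (Int.natCast_dvd_natCast.mpr hpd) (Int.gcd_dvd_left _ _)
    have hpmn : p ∣ Nat.gcd m n := by
      have := dvd_trans (Int.natCast_dvd_natCast.mpr hpd)
        (Int.gcd_dvd_right _ _)
      exact_mod_cast this
    have hpm : p ∣ m := hpmn.trans (Nat.gcd_dvd_left m n)
    have hpn : p ∣ n := hpmn.trans (Nat.gcd_dvd_right m n)
    obtain ⟨s', hs'⟩ := hps
    set d : ℕ := (m / p) * n with hd
    have hdn : n ∣ d := hd ▸ dvd_mul_left n (m / p)
    have hn' : p * (n / p) = n := Nat.mul_div_cancel' hpn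
    have hm' : m / p * p = m := Nat.div_mul_cancel hpm
    have hnZ : (n : ℤ) = (p : ℤ) * ((n / p : ℕ) : ℤ) := by exact_mod_cast hn'.symm
    have hmd : d = m * (n / p) := by
      calc d = m / p * n := hd
        _ = m / p * (p * (n / p)) := by rw [hn']
        _ = (m / p * p) * (n / p) := by ring
        _ = m * (n / p) := by rw [hm']
    have key : ∀ x : G, x ^ d = 1 := by
      intro x
      obtain ⟨h, j, rfl⟩ := hdecomp x
      rw [Commute.mul_pow (hcomm (A h) (b ^ j))]
      have e1 : (A h) ^ d = 1 := by
        rw [hA_pow]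
        have hd0 : (d : ZMod n) = 0 := (ZMod.natCast_eq_zero_iff d n).mpr hdn
        rw [nsmul_eq_mul, hd0, zero_mul, hA0]
      have e2 : (b ^ j) ^ d = 1 := by
        rw [← pow_mul]
        have hjd : j * d = m * (j * (n / p)) := by rw [hmd]; ring
        rw [hjd, pow_mul, hbm, hA_pow]
        have hz : ((j * (n / p) : ℕ)) • ((s : ZMod n)) = 0 := by
          rw [nsmul_eq_mul]
          have h0 : ((((j * (n / p) : ℕ) : ℤ) * s : ℤ) : ZMod n) = 0 := by
            rw [ZMod.intCast_zmod_eq_zero_iff_dvd, hs', hnZ, Nat.cast_mul]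
            exact ⟨(j : ℤ) * s', by ring⟩
          calc ((j * (n / p) : ℕ) : ZMod n) * ((s : ℤ) : ZMod n)
              = ((((j * (n / p) : ℕ) : ℤ) * s : ℤ) : ZMod n) := by rw [Int.cast_mul, Int.cast_natCast]
            _ = 0 := h0
        rw [hz, hA0]
      rw [e1, e2, one_mul]
    haveI := hcyc
    have hexp : Monoid.exponent G ∣ d := Monoid.exponent_dvd_of_forall_pow_eq_one key
    rw [IsCyclic.exponent_eq_card, hcard] at hexp
    have hdpos : 0 < d := by
      have h1 : 0 < m / p := Nat.div_pos (Nat.le_of_dvd (by omega) hpm) hp.pos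
      exact Nat.mul_pos h1 (by omega)
    have hlt : d < n * m := by
      have h1 : m / p < m := Nat.div_lt_self (by omega) hp.one_lt
      calc d = (m / p) * n := hd
        _ < m * n := by exact mul_lt_mul_of_pos_right h1 (by omega)
        _ = n * m := mul_comm m n
    exact absurd (Nat.le_of_dvd hdpos hexp) (by omega)
  · -- gcd = 1 → cyclic
    intro hgcd
    obtain ⟨t, hwt⟩ := exists_coprime_rep m n (by omega) s hgcd
    set w : ℤ := s + m * t with hw
    set c : G := A ((t : ZMod n)) * b with hc
    have hec : e c = ((t : ZMod n), 1) := by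
      rw [hc, hmul, heA, heb, hf0]
      simp
    have hcm : c ^ m = A ((w : ZMod n)) := by
      rw [hc, Commute.mul_pow (hcomm _ _), hA_pow, hbm, hA_mul]
      congr 1
      rw [nsmul_eq_mul, hw]
      push_cast
      ring
    have hcop : IsCoprime (n : ℤ) w := (Int.isCoprime_iff_gcd_eq_one.mpr hwt).symm
    have hAw_pow : ∀ k : ℕ, (A ((w : ZMod n))) ^ k = 1 ↔ n ∣ k := by
      intro k
      rw [hA_pow, ← hA0]
      constructor
      · intro hk
        have h1 := hA_inj hk
        rw [nsmul_eq_mul] at h1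
        have h2 : (((k : ℤ) * w : ℤ) : ZMod n) = 0 := by push_cast; exact h1
        rw [ZMod.intCast_zmod_eq_zero_iff_dvd] at h2
        have h3 : (n : ℤ) ∣ (k : ℤ) := hcop.dvd_of_dvd_mul_right h2
        exact_mod_cast h3
      · rintro ⟨k', rfl⟩
        rw [nsmul_eq_mul]
        have h1 : ((n * k' : ℕ) : ZMod n) = 0 :=
          (ZMod.natCast_eq_zero_iff _ _).mpr ⟨k', rfl⟩
        rw [h1, zero_mul]
    have hordAw : orderOf (c ^ m) = n := by
      rw [hcm]
      exact Nat.dvd_antisymm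
        (orderOf_dvd_of_pow_eq_one ((hAw_pow n).mpr dvd_rfl))
        ((hAw_pow _).mp (pow_orderOf_eq_one _))
    have hmc : m ∣ orderOf c := by
      have h1 : (e (c ^ orderOf c)).2 = 0 := by rw [pow_orderOf_eq_one, hone]
      rw [hsnd, hec, mul_one] at h1
      exact (ZMod.natCast_eq_zero_iff _ _).mp h1
    have hcmn : orderOf c ∣ m * n := by
      apply orderOf_dvd_of_pow_eq_one
      rw [pow_mul, hcm]
      exact (hAw_pow n).mpr dvd_rfl
    have hmnc : m * n ∣ orderOf c := by
      obtain ⟨q, hq⟩ := hmc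
      have h1 : (c ^ m) ^ q = 1 := by rw [← pow_mul, ← hq, pow_orderOf_eq_one]
      have hnq : n ∣ q := hordAw ▸ orderOf_dvd_of_pow_eq_one h1
      exact hq ▸ mul_dvd_mul_left m hnq
    refine isCyclic_of_orderOf_eq_card c ?_
    rw [hcard, Nat.dvd_antisymm hcmn hmnc, mul_comm]
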